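/- Let X be a convex polyomino such that V(X) ⊆ ℕ² is a sublattice of ℕ² with minimum (0,0) and maximum (m,n). If X is not thin, then for any injective order-preserving map ω from JI(X) to ℕ, the number of maximal chains of V(X) with exactly 2 descents is strictly less than r_2, the number of 2-rook configurations in X; that is, |M_2(X)| < r_2. -/

import Mathlib

/-!  Cells in ℤ² are identified with their top-right corners: the cell `C v`
is the unit square `[v.1 - 1, v.1] × [v.2 - 1, v.2] ⊆ ℝ²`. -/

/-- Two cells (identified by their top-right corners) are adjacent if they share an edge. -/
def Adj (c d : ℤ × ℤ) : Prop :=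
  (c.1 = d.1 ∧ (c.2 = d.2 + 1 ∨ d.2 = c.2 + 1)) ∨
  (c.2 = d.2 ∧ (c.1 = d.1 + 1 ∨ d.1 = c.1 + 1))

/-- A polyomino: a nonempty finite set of cells, connected under adjacency. -/
def IsPolyomino (X : Finset (ℤ × ℤ)) : Prop :=
  X.Nonempty ∧ ∀ c ∈ X, ∀ d ∈ X,
    Relation.ReflTransGen (fun a b => a ∈ X ∧ b ∈ X ∧ Adj a b) c d

/-- A polyomino is convex if it is both row-convex and column-convex. -/
def IsConvexPoly (X : Finset (ℤ × ℤ)) : Prop :=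
  (∀ a b x y : ℤ, (a, y) ∈ X → (b, y) ∈ X → a ≤ x → x ≤ b → (x, y) ∈ X) ∧
  (∀ a b x y : ℤ, (y, a) ∈ X → (y, b) ∈ X → a ≤ x → x ≤ b → (y, x) ∈ X)

/-- `X` is thin if it contains no 2 × 2 block of four cells. -/
def IsThin (X : Finset (ℤ × ℤ)) : Prop :=
  ¬ ∃ w : ℤ × ℤ, w ∈ X ∧ w + ((1, 0) : ℤ × ℤ) ∈ X ∧
    w + ((0, 1) : ℤ × ℤ) ∈ X ∧ w + ((1, 1) : ℤ × ℤ) ∈ X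

/-- `X` is `L`-convex: convex, and any two cells are joined by a monotone path of cells
of `X` changing direction (horizontal to vertical or vice versa) at most once. -/
def IsLConvexPoly (X : Finset (ℤ × ℤ)) : Prop :=
  IsConvexPoly X ∧ ∀ c ∈ X, ∀ d ∈ X,
    ((∀ x : ℤ, min c.1 d.1 ≤ x → x ≤ max c.1 d.1 → ((x, c.2) : ℤ × ℤ) ∈ X) ∧
     (∀ y : ℤ, min c.2 d.2 ≤ y → y ≤ max c.2 d.2 → ((d.1, y) : ℤ × ℤ) ∈ X)) ∨
    ((∀ y : ℤ, min c.2 d.2 ≤ y → y ≤ max c.2 d.2 → ((c.1, y) : ℤ × ℤ) ∈ X) ∧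
     (∀ x : ℤ, min c.1 d.1 ≤ x → x ≤ max c.1 d.1 → ((x, d.2) : ℤ × ℤ) ∈ X))

/-- The vertex set `V(X)`: all corners of cells of `X`, partially ordered componentwise. -/
def Verts (X : Finset (ℤ × ℤ)) : Set (ℤ × ℤ) :=
  {v | ∃ c ∈ X, v = c ∨ v = c - ((1, 0) : ℤ × ℤ) ∨
    v = c - ((0, 1) : ℤ × ℤ) ∨ v = c - ((1, 1) : ℤ × ℤ)}

/-- Setup: `V(X) ⊆ ℕ²` is a sublattice of `ℕ²` (closed under componentwise max and min)
with minimum `(0,0)` and maximum `(m,n)`. -/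
def LatticeSetup (X : Finset (ℤ × ℤ)) (m n : ℕ) : Prop :=
  (∀ a ∈ Verts X, ∀ b ∈ Verts X, a ⊔ b ∈ Verts X ∧ a ⊓ b ∈ Verts X) ∧
  ((0, 0) : ℤ × ℤ) ∈ Verts X ∧ (((m : ℤ), (n : ℤ)) : ℤ × ℤ) ∈ Verts X ∧
  ∀ v ∈ Verts X, ((0, 0) : ℤ × ℤ) ≤ v ∧ v ≤ (((m : ℤ), (n : ℤ)) : ℤ × ℤ)

/-- Join-irreducible elements of the lattice `V(X)`: nonminimal elements that are not
the join of two elements strictly below them. -/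
def JoinIrr (X : Finset (ℤ × ℤ)) : Set (ℤ × ℤ) :=
  {p | p ∈ Verts X ∧ (∃ q ∈ Verts X, q < p) ∧
    ∀ a ∈ Verts X, ∀ b ∈ Verts X, a < p → b < p → a ⊔ b ≠ p}

/-- `ω` is an injective order-preserving map from `JI(X)` to `ℕ`. -/
def OmegaOK (X : Finset (ℤ × ℤ)) (ω : ℤ × ℤ → ℕ) : Prop :=
  Set.InjOn ω (JoinIrr X) ∧
  ∀ p ∈ JoinIrr X, ∀ q ∈ JoinIrr X, p ≤ q → ω p ≤ ω q

/-- A maximal chain of `V(X)`, written as a monotone unit lattice path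
`μ 0 = (0,0) < μ 1 < ⋯ < μ (m+n) = (m,n)` through vertices of `X`
(normalized by `μ i = (m,n)` for `i ≥ m+n`). -/
def IsMaxChainPath (X : Finset (ℤ × ℤ)) (m n : ℕ) (μ : ℕ → ℤ × ℤ) : Prop :=
  μ 0 = (0, 0) ∧
  (∀ i, i < m + n → μ (i + 1) - μ i = ((1, 0) : ℤ × ℤ) ∨
    μ (i + 1) - μ i = ((0, 1) : ℤ × ℤ)) ∧
  (∀ i, m + n ≤ i → μ i = (((m : ℤ), (n : ℤ)) : ℤ × ℤ)) ∧
  (∀ i, i ≤ m + n → μ i ∈ Verts X)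

/-- `i` is a descent of the maximal chain `μ`:  `ω p_i > ω p_{i+1}`, where `p_j` is the
unique join-irreducible `p` with `p ≤ μ j` and `p ≰ μ (j-1)`. -/
def DescentAt (X : Finset (ℤ × ℤ)) (ω : ℤ × ℤ → ℕ) (μ : ℕ → ℤ × ℤ) (i : ℕ) : Prop :=
  ∃ p ∈ JoinIrr X, ∃ q ∈ JoinIrr X,
    p ≤ μ i ∧ ¬ p ≤ μ (i - 1) ∧ q ≤ μ (i + 1) ∧ ¬ q ≤ μ i ∧ ω q < ω p

/-- The descent set of a maximal chain: descents `i` with `1 ≤ i ≤ m+n-1`. -/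
def Des (X : Finset (ℤ × ℤ)) (m n : ℕ) (ω : ℤ × ℤ → ℕ) (μ : ℕ → ℤ × ℤ) : Set ℕ :=
  {i | 1 ≤ i ∧ i < m + n ∧ DescentAt X ω μ i}

/-- `|M_k(X)|`: the number of maximal chains of `V(X)` with exactly `k` descents. -/
noncomputable def numChains (X : Finset (ℤ × ℤ)) (m n : ℕ) (ω : ℤ × ℤ → ℕ) (k : ℕ) : ℕ :=
  Set.ncard {μ : ℕ → ℤ × ℤ | IsMaxChainPath X m n μ ∧ (Des X m n ω μ).ncard = k}

/-- A `k`-rook configuration in `X`: `k` cells of `X`, no two in the same row or column. -/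
def IsRookConfig (X : Finset (ℤ × ℤ)) (k : ℕ) (S : Finset (ℤ × ℤ)) : Prop :=
  ↑S ⊆ (↑X : Set (ℤ × ℤ)) ∧ S.card = k ∧
  ∀ c ∈ S, ∀ d ∈ S, c ≠ d → c.1 ≠ d.1 ∧ c.2 ≠ d.2

/-- `r_k`: the number of `k`-rook configurations in `X`. -/
noncomputable def rook (X : Finset (ℤ × ℤ)) (k : ℕ) : ℕ :=
  Set.ncard {S : Finset (ℤ × ℤ) | IsRookConfig X k S}

/-- The map `ψ`: sends a maximal chain `μ` to the set of cells `C (μ (i+1))` for `i ∈ Des μ`. -/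
def psi (X : Finset (ℤ × ℤ)) (m n : ℕ) (ω : ℤ × ℤ → ℕ) (μ : ℕ → ℤ × ℤ) :
    Set (ℤ × ℤ) :=
  (fun i => μ (i + 1)) '' Des X m n ω μ

/-- The ideal `I_X` of the polyomino ring: generated by the inner 2-minors
`x_a x_b - x_c x_d` for intervals `[a,b]` of `V(X)`. -/
noncomputable def polyominoIdeal (kk : Type*) [Field kk] (X : Finset (ℤ × ℤ)) :
    Ideal (MvPolynomial (Verts X) kk) :=
  Ideal.span {f | ∃ a b c d : Verts X,
    (a : ℤ × ℤ) < (b : ℤ × ℤ) ∧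
    (c : ℤ × ℤ) = (((a : ℤ × ℤ).1, (b : ℤ × ℤ).2) : ℤ × ℤ) ∧
    (d : ℤ × ℤ) = (((b : ℤ × ℤ).1, (a : ℤ × ℤ).2) : ℤ × ℤ) ∧
    f = MvPolynomial.X a * MvPolynomial.X b - MvPolynomial.X c * MvPolynomial.X d}

/-- `dim_k (k[X])_i`: the dimension of the degree-`i` graded component of `k[X] = R/I_X`,
realized as the image of the homogeneous degree-`i` part of `R` in the quotient. -/
noncomputable def hilbCoeff (kk : Type*) [Field kk] (X : Finset (ℤ × ℤ)) (i : ℕ) : ℕ :=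
  Module.finrank kk (Submodule.map
    (Ideal.Quotient.mkₐ kk (polyominoIdeal kk X)).toLinearMap
    (MvPolynomial.homogeneousSubmodule (Verts X) kk i))

/-- The Hilbert series `HS(t) = Σ_{i ≥ 0} dim_k (k[X])_i t^i ∈ ℤ[[t]]`. -/
noncomputable def hilbSeries (kk : Type*) [Field kk] (X : Finset (ℤ × ℤ)) :
    PowerSeries ℤ :=
  PowerSeries.mk fun i => (hilbCoeff kk X i : ℤ)

/-- The region `⋃ X ⊆ ℝ²` covered by the cells of `X`. -/
def Region (X : Finset (ℤ × ℤ)) : Set (ℝ × ℝ) :=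
  ⋃ c ∈ X, Set.Icc (((c.1 : ℝ) - 1, (c.2 : ℝ) - 1) : ℝ × ℝ) (((c.1 : ℝ), (c.2 : ℝ)) : ℝ × ℝ)

/-- Left-boundary vertices: top-left corners of cells of `X` lying on the topological
boundary of the region `⋃ X ⊆ ℝ²`. -/
def LeftBdry (X : Finset (ℤ × ℤ)) : Set (ℤ × ℤ) :=
  {v | (∃ c ∈ X, v = c - ((1, 0) : ℤ × ℤ)) ∧
    (((v.1 : ℝ), (v.2 : ℝ)) : ℝ × ℝ) ∈ frontier (Region X)}

/-- Bottom-boundary vertices: bottom-right corners of cells of `X` lying on the topological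
boundary of the region `⋃ X ⊆ ℝ²`. -/
def BottomBdry (X : Finset (ℤ × ℤ)) : Set (ℤ × ℤ) :=
  {v | (∃ c ∈ X, v = c - ((0, 1) : ℤ × ℤ)) ∧
    (((v.1 : ℝ), (v.2 : ℝ)) : ℝ × ℝ) ∈ frontier (Region X)}

namespace RR

variable {X : Finset (ℤ × ℤ)} {m n : ℕ} {ω : ℤ × ℤ → ℕ} {μ ν : ℕ → ℤ × ℤ}

lemma verts_finite (X : Finset (ℤ × ℤ)) : (Verts X).Finite := by
  have h : Verts X ⊆ ↑(X.biUnion fun c =>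
      ({c, c - ((1,0) : ℤ×ℤ), c - ((0,1) : ℤ×ℤ), c - ((1,1) : ℤ×ℤ)} : Finset (ℤ×ℤ))) := by
    rintro v ⟨c, hc, h⟩
    simp only [Finset.coe_biUnion, Set.mem_iUnion, Finset.mem_coe, Finset.mem_insert,
      Finset.mem_singleton]
    exact ⟨c, hc, by rcases h with h | h | h | h <;> simp [h]⟩
  exact Set.Finite.subset (Finset.finite_toSet _) h

lemma verts_cases {x y : ℤ} (h : ((x, y) : ℤ × ℤ) ∈ Verts X) :
    ((x, y) : ℤ × ℤ) ∈ X ∨ ((x+1, y) : ℤ × ℤ) ∈ X ∨ ((x, y+1) : ℤ × ℤ) ∈ X ∨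
      ((x+1, y+1) : ℤ × ℤ) ∈ X := by
  obtain ⟨c, hc, hcase⟩ := h
  obtain ⟨c1, c2⟩ := c
  rcases hcase with h | h | h | h
  · left; rwa [h]
  · right; left
    have h1 : x = c1 - 1 := congrArg Prod.fst h
    have h2 : y = c2 - 0 := congrArg Prod.snd h
    have : (c1, c2) = ((x + 1 : ℤ), y) := by rw [Prod.ext_iff]; constructor <;> omega
    rwa [← this]
  · right; right; left
    have h1 : x = c1 - 0 := congrArg Prod.fst h
    have h2 : y = c2 - 1 := congrArg Prod.snd h
    have : (c1, c2) = (x, (y + 1 : ℤ)) := by rw [Prod.ext_iff]; constructor <;> omega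
    rwa [← this]
  · right; right; right
    have h1 : x = c1 - 1 := congrArg Prod.fst h
    have h2 : y = c2 - 1 := congrArg Prod.snd h
    have : (c1, c2) = ((x + 1 : ℤ), (y + 1 : ℤ)) := by rw [Prod.ext_iff]; constructor <;> omega
    rwa [← this]

def ColMin (X : Finset (ℤ × ℤ)) (p : ℤ × ℤ) : Prop :=
  p ∈ Verts X ∧ ∀ w ∈ Verts X, w.1 = p.1 → p.2 ≤ w.2

def RowMin (X : Finset (ℤ × ℤ)) (p : ℤ × ℤ) : Prop :=
  p ∈ Verts X ∧ ∀ w ∈ Verts X, w.2 = p.2 → p.1 ≤ w.1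

lemma exists_colMin {v : ℤ × ℤ} (hv : v ∈ Verts X) : ∃ p, ColMin X p ∧ p.1 = v.1 := by
  obtain ⟨p, hp, hmin⟩ := Set.exists_min_image {w ∈ Verts X | w.1 = v.1} (fun w => w.2)
    ((verts_finite X).subset (Set.sep_subset _ _)) ⟨v, hv, rfl⟩
  exact ⟨p, ⟨hp.1, fun w hw h1 => hmin w ⟨hw, by rw [h1, hp.2]⟩⟩, hp.2⟩

lemma exists_rowMin {v : ℤ × ℤ} (hv : v ∈ Verts X) : ∃ p, RowMin X p ∧ p.2 = v.2 := by
  obtain ⟨p, hp, hmin⟩ := Set.exists_min_image {w ∈ Verts X | w.2 = v.2} (fun w => w.1)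
    ((verts_finite X).subset (Set.sep_subset _ _)) ⟨v, hv, rfl⟩
  exact ⟨p, ⟨hp.1, fun w hw h1 => hmin w ⟨hw, by rw [h1, hp.2]⟩⟩, hp.2⟩

lemma colMin_le_snd (hlat : LatticeSetup X m n) {p w : ℤ × ℤ} (hp : ColMin X p)
    (hw : w ∈ Verts X) (h : p.1 ≤ w.1) : p.2 ≤ w.2 := by
  have hm := (hlat.1 p hp.1 w hw).2
  have h2 : p.2 ≤ (p ⊓ w).2 := hp.2 _ hm (inf_eq_left.mpr h)
  have h3 : p.2 ⊓ w.2 ≤ w.2 := inf_le_right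
  exact le_trans h2 h3

lemma rowMin_le_fst (hlat : LatticeSetup X m n) {p w : ℤ × ℤ} (hp : RowMin X p)
    (hw : w ∈ Verts X) (h : p.2 ≤ w.2) : p.1 ≤ w.1 := by
  have hm := (hlat.1 p hp.1 w hw).2
  have h2 : p.1 ≤ (p ⊓ w).1 := hp.2 _ hm (inf_eq_left.mpr h)
  have h3 : p.1 ⊓ w.1 ≤ w.1 := inf_le_right
  exact le_trans h2 h3

lemma colMin_le (hlat : LatticeSetup X m n) {p w : ℤ × ℤ} (hp : ColMin X p)
    (hw : w ∈ Verts X) (h : p.1 ≤ w.1) : p ≤ w :=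
  Prod.le_def.mpr ⟨h, colMin_le_snd hlat hp hw h⟩

lemma rowMin_le (hlat : LatticeSetup X m n) {p w : ℤ × ℤ} (hp : RowMin X p)
    (hw : w ∈ Verts X) (h : p.2 ≤ w.2) : p ≤ w :=
  Prod.le_def.mpr ⟨rowMin_le_fst hlat hp hw h, h⟩

lemma colMin_unique {p q : ℤ × ℤ} (hp : ColMin X p) (hq : ColMin X q) (h : p.1 = q.1) :
    p = q :=
  Prod.ext_iff.mpr ⟨h, le_antisymm (hp.2 q hq.1 h.symm) (hq.2 p hp.1 h)⟩

lemma rowMin_unique {p q : ℤ × ℤ} (hp : RowMin X p) (hq : RowMin X q) (h : p.2 = q.2) :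
    p = q :=
  Prod.ext_iff.mpr ⟨le_antisymm (hp.2 q hq.1 h.symm) (hq.2 p hp.1 h), h⟩

lemma colMin_joinIrr (hlat : LatticeSetup X m n) {p : ℤ × ℤ} (hp : ColMin X p)
    (h1 : 1 ≤ p.1) : p ∈ JoinIrr X := by
  have key : ∀ c : ℤ × ℤ, c ∈ Verts X → c < p → c.1 ≠ p.1 := by
    rintro c hc hcp hceq
    have h2 := hp.2 c hc hceq
    have h3 := (Prod.le_def.mp hcp.le).2
    exact hcp.ne (Prod.ext_iff.mpr ⟨hceq, le_antisymm h3 h2⟩)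
  refine ⟨hp.1, ⟨(0,0), hlat.2.1, ?_⟩, ?_⟩
  · have hb := (hlat.2.2.2 p hp.1).1
    refine lt_of_le_of_ne hb (fun h => ?_)
    have : ((0,0) : ℤ×ℤ).1 = p.1 := congrArg Prod.fst h
    have h0 : (0 : ℤ) = p.1 := this
    omega
  · rintro a ha b hb hap hbp hsup
    have hs1 : a.1 ⊔ b.1 = p.1 := congrArg Prod.fst hsup
    rcases le_total a.1 b.1 with h | h
    · exact key b hb hbp (by rw [← hs1, sup_eq_right.mpr h])
    · exact key a ha hap (by rw [← hs1, sup_eq_left.mpr h])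

lemma rowMin_joinIrr (hlat : LatticeSetup X m n) {p : ℤ × ℤ} (hp : RowMin X p)
    (h1 : 1 ≤ p.2) : p ∈ JoinIrr X := by
  have key : ∀ c : ℤ × ℤ, c ∈ Verts X → c < p → c.2 ≠ p.2 := by
    rintro c hc hcp hceq
    have h2 := hp.2 c hc hceq
    have h3 := (Prod.le_def.mp hcp.le).1
    exact hcp.ne (Prod.ext_iff.mpr ⟨le_antisymm h3 h2, hceq⟩)
  refine ⟨hp.1, ⟨(0,0), hlat.2.1, ?_⟩, ?_⟩
  · have hb := (hlat.2.2.2 p hp.1).1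
    refine lt_of_le_of_ne hb (fun h => ?_)
    have : ((0,0) : ℤ×ℤ).2 = p.2 := congrArg Prod.snd h
    have h0 : (0 : ℤ) = p.2 := this
    omega
  · rintro a ha b hb hap hbp hsup
    have hs1 : a.2 ⊔ b.2 = p.2 := congrArg Prod.snd hsup
    rcases le_total a.2 b.2 with h | h
    · exact key b hb hbp (by rw [← hs1, sup_eq_right.mpr h])
    · exact key a ha hap (by rw [← hs1, sup_eq_left.mpr h])

lemma joinIrr_colMin_or_rowMin {p : ℤ × ℤ} (hp : p ∈ JoinIrr X) :
    ColMin X p ∨ RowMin X p := by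
  by_contra hcon
  push_neg at hcon
  obtain ⟨h1, h2⟩ := hcon
  unfold ColMin at h1
  unfold RowMin at h2
  push_neg at h1 h2
  obtain ⟨w, hw, hw1, hw2⟩ := h1 hp.1
  obtain ⟨w', hw', hw1', hw2'⟩ := h2 hp.1
  have hwp : w < p := lt_of_le_of_ne (Prod.le_def.mpr ⟨le_of_eq hw1, le_of_lt hw2⟩)
    (fun h => absurd (congrArg Prod.snd h) (by omega))
  have hwp' : w' < p := lt_of_le_of_ne (Prod.le_def.mpr ⟨le_of_lt hw2', le_of_eq hw1'⟩)
    (fun h => absurd (congrArg Prod.fst h) (by omega))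
  refine hp.2.2 w hw w' hw' hwp hwp' ?_
  refine Prod.ext_iff.mpr ⟨?_, ?_⟩
  · show w.1 ⊔ w'.1 = p.1
    rw [hw1, sup_eq_left.mpr (le_of_lt hw2')]
  · show w.2 ⊔ w'.2 = p.2
    rw [hw1', sup_eq_right.mpr (le_of_lt hw2)]

lemma ji_step_R (hlat : LatticeSetup X m n) {u v p : ℤ × ℤ} (hu : u ∈ Verts X)
    (hv : v = u + (1, 0)) (hp : p ∈ JoinIrr X) (h1 : p ≤ v) (h2 : ¬ p ≤ u) :
    ColMin X p ∧ p.1 = v.1 := by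
  have hv1 : v.1 = u.1 + 1 := by rw [hv]; rfl
  have hv2 : v.2 = u.2 := by rw [hv]; show u.2 + 0 = u.2; rw [add_zero]
  obtain ⟨ha, hb⟩ := Prod.le_def.mp h1
  have hp1 : p.1 = v.1 := by
    by_contra hne
    exact h2 (Prod.le_def.mpr ⟨by omega, by omega⟩)
  refine ⟨?_, hp1⟩
  rcases joinIrr_colMin_or_rowMin hp with h | h
  · exact h
  · exfalso
    have hm := (hlat.1 p hp.1 u hu).2
    have h3 : p.1 ≤ (p ⊓ u).1 := h.2 _ hm (inf_eq_left.mpr (by omega))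
    have h5 : p.1 ≤ p.1 ⊓ u.1 := h3
    have h4 : p.1 ⊓ u.1 ≤ u.1 := inf_le_right
    omega

lemma ji_step_U (hlat : LatticeSetup X m n) {u v p : ℤ × ℤ} (hu : u ∈ Verts X)
    (hv : v = u + (0, 1)) (hp : p ∈ JoinIrr X) (h1 : p ≤ v) (h2 : ¬ p ≤ u) :
    RowMin X p ∧ p.2 = v.2 := by
  have hv1 : v.1 = u.1 := by rw [hv]; show u.1 + 0 = u.1; rw [add_zero]
  have hv2 : v.2 = u.2 + 1 := by rw [hv]; rfl
  obtain ⟨ha, hb⟩ := Prod.le_def.mp h1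
  have hp2 : p.2 = v.2 := by
    by_contra hne
    exact h2 (Prod.le_def.mpr ⟨by omega, by omega⟩)
  refine ⟨?_, hp2⟩
  rcases joinIrr_colMin_or_rowMin hp with h | h
  · exfalso
    have hm := (hlat.1 p hp.1 u hu).2
    have h3 : p.2 ≤ (p ⊓ u).2 := h.2 _ hm (inf_eq_left.mpr (by omega))
    have h5 : p.2 ≤ p.2 ⊓ u.2 := h3
    have h4 : p.2 ⊓ u.2 ≤ u.2 := inf_le_right
    omega
  · exact h

lemma chain_step (hch : IsMaxChainPath X m n μ) {i : ℕ} (hi : i < m + n) :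
    μ (i+1) = μ i + (1,0) ∨ μ (i+1) = μ i + (0,1) := by
  rcases hch.2.1 i hi with h | h
  · exact Or.inl ((sub_eq_iff_eq_add.mp h).trans (add_comm _ _))
  · exact Or.inr ((sub_eq_iff_eq_add.mp h).trans (add_comm _ _))

lemma chain_le_succ (hch : IsMaxChainPath X m n μ) (i : ℕ) : μ i ≤ μ (i+1) := by
  rcases lt_or_ge i (m+n) with h | h
  · rcases chain_step hch h with h' | h' <;> rw [h'] <;>
      refine Prod.le_def.mpr ⟨?_, ?_⟩ <;> show _ ≤ _ + _ <;> omega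
  · rw [hch.2.2.1 i h, hch.2.2.1 (i+1) (le_trans h (Nat.le_succ i))]

lemma chain_mono (hch : IsMaxChainPath X m n μ) : Monotone μ :=
  monotone_nat_of_le_succ (chain_le_succ hch)

lemma chain_mem (hlat : LatticeSetup X m n) (hch : IsMaxChainPath X m n μ) (i : ℕ) :
    μ i ∈ Verts X := by
  rcases le_or_gt i (m+n) with h | h
  · exact hch.2.2.2 i h
  · rw [hch.2.2.1 i h.le]; exact hlat.2.2.1

lemma chain_nonneg (hlat : LatticeSetup X m n) (hch : IsMaxChainPath X m n μ) (i : ℕ) :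
    0 ≤ (μ i).1 ∧ 0 ≤ (μ i).2 := by
  have h := (hlat.2.2.2 (μ i) (chain_mem hlat hch i)).1
  exact Prod.le_def.mp h

lemma chain_sum (hch : IsMaxChainPath X m n μ) : ∀ {i : ℕ}, i ≤ m + n →
    (μ i).1 + (μ i).2 = (i : ℤ) := by
  intro i
  induction i with
  | zero =>
    intro _
    have h1 : (μ 0).1 = 0 := congrArg Prod.fst hch.1
    have h2 : (μ 0).2 = 0 := congrArg Prod.snd hch.1
    omega
  | succ k ih =>
    intro h
    have hk : k < m + n := h
    have h2 := ih (le_of_lt hk)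
    rcases chain_step hch hk with h' | h'
    · have e1 : (μ (k+1)).1 = (μ k).1 + 1 := by rw [h']; rfl
      have e2 : (μ (k+1)).2 = (μ k).2 := by rw [h']; show (μ k).2 + 0 = _; rw [add_zero]
      push_cast
      omega
    · have e1 : (μ (k+1)).1 = (μ k).1 := by rw [h']; show (μ k).1 + 0 = _; rw [add_zero]
      have e2 : (μ (k+1)).2 = (μ k).2 + 1 := by rw [h']; rfl
      push_cast
      omega

lemma overlap_row (hpoly : IsPolyomino X) {x1 x2 y y2 : ℤ} (hy : y2 = y + 1)
    (h1 : ((x1, y) : ℤ×ℤ) ∈ X) (h2 : ((x2, y2) : ℤ×ℤ) ∈ X) :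
    ∃ x : ℤ, ((x, y) : ℤ×ℤ) ∈ X ∧ ((x, y2) : ℤ×ℤ) ∈ X := by
  subst hy
  have hpath := hpoly.2 _ h1 _ h2
  have aux : ∀ d : ℤ×ℤ, Relation.ReflTransGen (fun a b => a ∈ X ∧ b ∈ X ∧ Adj a b) (x1, y) d →
      y + 1 ≤ d.2 → ∃ x : ℤ, ((x, y) : ℤ×ℤ) ∈ X ∧ ((x, y + 1) : ℤ×ℤ) ∈ X := by
    intro d hd
    induction hd with
    | refl =>
      intro h
      have h' : y + 1 ≤ y := h
      omega
    | tail hcb hstep ih =>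
      rename_i b c
      intro hc2
      rcases le_or_gt (y+1) b.2 with hb | hb
      · exact ih hb
      · obtain ⟨hbX, hcX, hadj⟩ := hstep
        rcases hadj with ⟨hfst, h | h⟩ | ⟨hsnd, _⟩
        · omega
        · refine ⟨b.1, ?_, ?_⟩
          · have hbb : b = (b.1, y) := Prod.ext_iff.mpr ⟨rfl, by omega⟩
            rwa [← hbb]
          · have hcc : c = (b.1, y + 1) := Prod.ext_iff.mpr ⟨hfst.symm, by omega⟩
            rwa [← hcc]
        · omega
  exact aux _ hpath (by show y + 1 ≤ y + 1; omega)

lemma overlap_col (hpoly : IsPolyomino X) {x x2 y1 y2 : ℤ} (hx : x2 = x + 1)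
    (h1 : ((x, y1) : ℤ×ℤ) ∈ X) (h2 : ((x2, y2) : ℤ×ℤ) ∈ X) :
    ∃ y : ℤ, ((x, y) : ℤ×ℤ) ∈ X ∧ ((x2, y) : ℤ×ℤ) ∈ X := by
  subst hx
  have hpath := hpoly.2 _ h1 _ h2
  have aux : ∀ d : ℤ×ℤ, Relation.ReflTransGen (fun a b => a ∈ X ∧ b ∈ X ∧ Adj a b) (x, y1) d →
      x + 1 ≤ d.1 → ∃ y : ℤ, ((x, y) : ℤ×ℤ) ∈ X ∧ ((x + 1, y) : ℤ×ℤ) ∈ X := by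
    intro d hd
    induction hd with
    | refl =>
      intro h
      have h' : x + 1 ≤ x := h
      omega
    | tail hcb hstep ih =>
      rename_i b c
      intro hc2
      rcases le_or_gt (x+1) b.1 with hb | hb
      · exact ih hb
      · obtain ⟨hbX, hcX, hadj⟩ := hstep
        rcases hadj with ⟨hfst, _⟩ | ⟨hsnd, h | h⟩
        · omega
        · omega
        · refine ⟨b.2, ?_, ?_⟩
          · have hbb : b = (x, b.2) := Prod.ext_iff.mpr ⟨by omega, rfl⟩
            rwa [← hbb]
          · have hcc : c = (x + 1, b.2) := Prod.ext_iff.mpr ⟨by omega, hsnd.symm⟩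
            rwa [← hcc]
  exact aux _ hpath (by show x + 1 ≤ x + 1; omega)

lemma cell_of_corners (hpoly : IsPolyomino X) (hconv : IsConvexPoly X) {a b : ℤ}
    (h1 : ((a, b) : ℤ×ℤ) ∈ Verts X) (h2 : ((a-1, b) : ℤ×ℤ) ∈ Verts X)
    (h3 : ((a, b-1) : ℤ×ℤ) ∈ Verts X) (h4 : ((a-1, b-1) : ℤ×ℤ) ∈ Verts X) :
    ((a, b) : ℤ×ℤ) ∈ X := by
  by_contra hX
  have hB := verts_cases h1
  have hC := verts_cases h2
  have hD := verts_cases h3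
  have hA := verts_cases h4
  rw [show a - 1 + 1 = a by ring] at hC hA
  rw [show b - 1 + 1 = b by ring] at hD hA
  replace hB := hB.resolve_left hX
  replace hC : ((a-1,b):ℤ×ℤ) ∈ X ∨ ((a-1,b+1):ℤ×ℤ) ∈ X ∨ ((a,b+1):ℤ×ℤ) ∈ X := by tauto
  replace hD : ((a,b-1):ℤ×ℤ) ∈ X ∨ ((a+1,b-1):ℤ×ℤ) ∈ X ∨ ((a+1,b):ℤ×ℤ) ∈ X := by tauto
  replace hA : ((a-1,b-1):ℤ×ℤ) ∈ X ∨ ((a,b-1):ℤ×ℤ) ∈ X ∨ ((a-1,b):ℤ×ℤ) ∈ X := by tauto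
  have O1 : ¬ (((a,b-1):ℤ×ℤ) ∈ X ∧ ((a,b+1):ℤ×ℤ) ∈ X) := by
    rintro ⟨u, v⟩
    exact hX (hconv.2 (b-1) (b+1) b a u v (by omega) (by omega))
  have O2 : ¬ (((a-1,b):ℤ×ℤ) ∈ X ∧ ((a+1,b):ℤ×ℤ) ∈ X) := by
    rintro ⟨u, v⟩
    exact hX (hconv.1 (a-1) (a+1) a b u v (by omega) (by omega))
  have C0 : ((a,b+1):ℤ×ℤ) ∈ X → ((a+1,b):ℤ×ℤ) ∈ X → False := by
    intro hN hE
    rcases hA with h | h | h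
    · obtain ⟨x, hx1, hx2⟩ := overlap_row hpoly (by ring) h hE
      rcases le_total x a with hxa | hxa
      · exact hX (hconv.1 x (a+1) a b hx2 hE (by omega) (by omega))
      · exact O1 ⟨hconv.1 (a-1) x a (b-1) h hx1 (by omega) (by omega), hN⟩
    · exact O1 ⟨h, hN⟩
    · exact O2 ⟨h, hE⟩
  have C1 : ((a,b+1):ℤ×ℤ) ∈ X → False := by
    intro hN
    rcases hD with h | h | h
    · exact O1 ⟨h, hN⟩
    · obtain ⟨yy, hy1, hy2⟩ := overlap_col hpoly (by ring) hN h
      rcases le_total yy b with hyb | hyb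
      · exact hX (hconv.2 yy (b+1) b a hy1 hN (by omega) (by omega))
      · exact C0 hN (hconv.2 (b-1) yy b (a+1) h hy2 (by omega) (by omega))
    · exact C0 hN h
  have C2 : ((a+1,b):ℤ×ℤ) ∈ X → False := by
    intro hE
    rcases hC with h | h | h
    · exact O2 ⟨h, hE⟩
    · obtain ⟨x, hx1, hx2⟩ := overlap_row hpoly (by ring) hE h
      rcases le_total x a with hxa | hxa
      · exact hX (hconv.1 x (a+1) a b hx1 hE (by omega) (by omega))
      · exact C1 (hconv.1 (a-1) x a (b+1) h hx2 (by omega) (by omega))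
    · exact C1 h
  rcases hB with h | h | h
  · exact C2 h
  · exact C1 h
  · rcases hC with h' | h' | h'
    · rcases hD with h'' | h'' | h''
      · obtain ⟨yy, hy1, hy2⟩ := overlap_col hpoly (by ring) h'' h
        rcases le_total yy b with hyb | hyb
        · exact C2 (hconv.2 yy (b+1) b (a+1) hy2 h (by omega) (by omega))
        · exact hX (hconv.2 (b-1) yy b a h'' hy1 (by omega) (by omega))
      · exact C2 (hconv.2 (b-1) (b+1) b (a+1) h'' h (by omega) (by omega))
      · exact C2 h''
    · exact C1 (hconv.1 (a-1) (a+1) a (b+1) h' h (by omega) (by omega))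
    · exact C1 h'

lemma no_descent_RR (hlat : LatticeSetup X m n) (hω : OmegaOK X ω)
    (hch : IsMaxChainPath X m n μ) {i : ℕ}
    (h1 : μ i = μ (i-1) + (1,0)) (h2 : μ (i+1) = μ i + (1,0)) :
    ¬ DescentAt X ω μ i := by
  rintro ⟨p, hpJ, q, hqJ, hp1, hp2, hq1, hq2, hlt⟩
  obtain ⟨hpc, hpa⟩ := ji_step_R hlat (chain_mem hlat hch (i-1)) h1 hpJ hp1 hp2
  obtain ⟨hqc, hqa⟩ := ji_step_R hlat (chain_mem hlat hch i) h2 hqJ hq1 hq2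
  have hqa' : q.1 = (μ i).1 + 1 := by rw [hqa, h2]; rfl
  have hle : p ≤ q := colMin_le hlat hpc hqc.1 (by omega)
  exact absurd (hω.2 p hpJ q hqJ hle) (by omega)

lemma no_descent_UU (hlat : LatticeSetup X m n) (hω : OmegaOK X ω)
    (hch : IsMaxChainPath X m n μ) {i : ℕ}
    (h1 : μ i = μ (i-1) + (0,1)) (h2 : μ (i+1) = μ i + (0,1)) :
    ¬ DescentAt X ω μ i := by
  rintro ⟨p, hpJ, q, hqJ, hp1, hp2, hq1, hq2, hlt⟩
  obtain ⟨hpc, hpa⟩ := ji_step_U hlat (chain_mem hlat hch (i-1)) h1 hpJ hp1 hp2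
  obtain ⟨hqc, hqa⟩ := ji_step_U hlat (chain_mem hlat hch i) h2 hqJ hq1 hq2
  have hqa' : q.2 = (μ i).2 + 1 := by rw [hqa, h2]; rfl
  have hle : p ≤ q := rowMin_le hlat hpc hqc.1 (by omega)
  exact absurd (hω.2 p hpJ q hqJ hle) (by omega)

lemma descent_RU (hlat : LatticeSetup X m n) (hω : OmegaOK X ω)
    (hch : IsMaxChainPath X m n μ) {i : ℕ}
    (h1 : μ i = μ (i-1) + (1,0)) (h2 : μ (i+1) = μ i + (0,1)) (hd : DescentAt X ω μ i) :
    ∃ P Q : ℤ × ℤ, ColMin X P ∧ RowMin X Q ∧ P.1 = (μ i).1 ∧ Q.2 = (μ i).2 + 1 ∧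
      ω Q < ω P ∧ Q.1 + 1 ≤ (μ i).1 ∧ (((μ i).1 - 1, (μ i).2 + 1) : ℤ×ℤ) ∈ Verts X := by
  obtain ⟨p, hpJ, q, hqJ, hp1, hp2, hq1, hq2, hlt⟩ := hd
  obtain ⟨hpc, hpa⟩ := ji_step_R hlat (chain_mem hlat hch (i-1)) h1 hpJ hp1 hp2
  obtain ⟨hqr, hqb⟩ := ji_step_U hlat (chain_mem hlat hch i) h2 hqJ hq1 hq2
  have hq2' : q.2 = (μ i).2 + 1 := by rw [hqb, h2]; rfl
  have hp2' : p.2 ≤ (μ i).2 := (Prod.le_def.mp hp1).2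
  have hqlt : q.1 + 1 ≤ (μ i).1 := by
    by_contra hq
    push_neg at hq
    have hle : p ≤ q := Prod.le_def.mpr ⟨by omega, by omega⟩
    exact absurd (hω.2 p hpJ q hqJ hle) (by omega)
  refine ⟨p, q, hpc, hqr, hpa, hq2', hlt, hqlt, ?_⟩
  have hsup := (hlat.1 q hqr.1 (μ (i-1)) (chain_mem hlat hch (i-1))).1
  have e1 : (μ i).1 = (μ (i-1)).1 + 1 := by rw [h1]; rfl
  have e2 : (μ i).2 = (μ (i-1)).2 := by rw [h1]; show (μ (i-1)).2 + 0 = _; rw [add_zero]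
  have he : q ⊔ μ (i-1) = (((μ i).1 - 1, (μ i).2 + 1) : ℤ×ℤ) := by
    refine Prod.ext_iff.mpr ⟨?_, ?_⟩
    · show q.1 ⊔ (μ (i-1)).1 = (μ i).1 - 1
      rw [sup_eq_right.mpr (show q.1 ≤ (μ (i-1)).1 by omega)]
      omega
    · show q.2 ⊔ (μ (i-1)).2 = (μ i).2 + 1
      rw [sup_eq_left.mpr (show (μ (i-1)).2 ≤ q.2 by omega)]
      omega
  rwa [he] at hsup

lemma descent_UR (hlat : LatticeSetup X m n) (hω : OmegaOK X ω)
    (hch : IsMaxChainPath X m n μ) {i : ℕ}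
    (h1 : μ i = μ (i-1) + (0,1)) (h2 : μ (i+1) = μ i + (1,0)) (hd : DescentAt X ω μ i) :
    ∃ P Q : ℤ × ℤ, RowMin X P ∧ ColMin X Q ∧ P.2 = (μ i).2 ∧ Q.1 = (μ i).1 + 1 ∧
      ω Q < ω P ∧ Q.2 + 1 ≤ (μ i).2 ∧ (((μ i).1 + 1, (μ i).2 - 1) : ℤ×ℤ) ∈ Verts X := by
  obtain ⟨p, hpJ, q, hqJ, hp1, hp2, hq1, hq2, hlt⟩ := hd
  obtain ⟨hpr, hpb⟩ := ji_step_U hlat (chain_mem hlat hch (i-1)) h1 hpJ hp1 hp2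
  obtain ⟨hqc, hqa⟩ := ji_step_R hlat (chain_mem hlat hch i) h2 hqJ hq1 hq2
  have hq1' : q.1 = (μ i).1 + 1 := by rw [hqa, h2]; rfl
  have hp1' : p.1 ≤ (μ i).1 := (Prod.le_def.mp hp1).1
  have hqlt : q.2 + 1 ≤ (μ i).2 := by
    by_contra hq
    push_neg at hq
    have hle : p ≤ q := Prod.le_def.mpr ⟨by omega, by omega⟩
    exact absurd (hω.2 p hpJ q hqJ hle) (by omega)
  refine ⟨p, q, hpr, hqc, hpb, hq1', hlt, hqlt, ?_⟩
  have hsup := (hlat.1 q hqc.1 (μ (i-1)) (chain_mem hlat hch (i-1))).1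
  have e1 : (μ i).1 = (μ (i-1)).1 := by rw [h1]; show (μ (i-1)).1 + 0 = _; rw [add_zero]
  have e2 : (μ i).2 = (μ (i-1)).2 + 1 := by rw [h1]; rfl
  have he : q ⊔ μ (i-1) = (((μ i).1 + 1, (μ i).2 - 1) : ℤ×ℤ) := by
    refine Prod.ext_iff.mpr ⟨?_, ?_⟩
    · show q.1 ⊔ (μ (i-1)).1 = (μ i).1 + 1
      rw [sup_eq_left.mpr (show (μ (i-1)).1 ≤ q.1 by omega)]
      omega
    · show q.2 ⊔ (μ (i-1)).2 = (μ i).2 - 1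
      rw [sup_eq_right.mpr (show q.2 ≤ (μ (i-1)).2 by omega)]
      omega
  rwa [he] at hsup

lemma descent_turn (hlat : LatticeSetup X m n) (hω : OmegaOK X ω)
    (hch : IsMaxChainPath X m n μ) {i : ℕ} (hi0 : 1 ≤ i) (hi1 : i < m + n)
    (hd : DescentAt X ω μ i) :
    (μ i = μ (i-1) + (1,0) ∧ μ (i+1) = μ i + (0,1)) ∨
    (μ i = μ (i-1) + (0,1) ∧ μ (i+1) = μ i + (1,0)) := by
  have hi' : i - 1 + 1 = i := by omega
  have hs1 := chain_step hch (show i - 1 < m + n by omega)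
  rw [hi'] at hs1
  have hs2 := chain_step hch hi1
  rcases hs1 with h1 | h1 <;> rcases hs2 with h2 | h2
  · exact absurd hd (no_descent_RR hlat hω hch h1 h2)
  · exact Or.inl ⟨h1, h2⟩
  · exact Or.inr ⟨h1, h2⟩
  · exact absurd hd (no_descent_UU hlat hω hch h1 h2)

lemma descent_diag (hlat : LatticeSetup X m n) (hω : OmegaOK X ω)
    (hch : IsMaxChainPath X m n μ) {i : ℕ} (hi0 : 1 ≤ i) (hi1 : i < m + n)
    (hd : DescentAt X ω μ i) : μ (i+1) = μ (i-1) + (1,1) := by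
  have e1 : ((1,0) : ℤ×ℤ) + (0,1) = (1,1) := by
    refine Prod.ext_iff.mpr ⟨?_, ?_⟩ <;> · show _ + _ = _; omega
  have e2 : ((0,1) : ℤ×ℤ) + (1,0) = (1,1) := by
    refine Prod.ext_iff.mpr ⟨?_, ?_⟩ <;> · show _ + _ = _; omega
  rcases descent_turn hlat hω hch hi0 hi1 hd with ⟨h1, h2⟩ | ⟨h1, h2⟩
  · rw [h2, h1, add_assoc, e1]
  · rw [h2, h1, add_assoc, e2]

lemma descent_cell (hpoly : IsPolyomino X) (hconv : IsConvexPoly X)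
    (hlat : LatticeSetup X m n) (hω : OmegaOK X ω)
    (hch : IsMaxChainPath X m n μ) {i : ℕ} (hi0 : 1 ≤ i) (hi1 : i < m + n)
    (hd : DescentAt X ω μ i) : μ (i+1) ∈ X := by
  rcases descent_turn hlat hω hch hi0 hi1 hd with ⟨h1, h2⟩ | ⟨h1, h2⟩
  · obtain ⟨P, Q, _, _, _, _, _, _, hver⟩ := descent_RU hlat hω hch h1 h2 hd
    have c1 : (μ i).1 = (μ (i-1)).1 + 1 := by rw [h1]; rfl
    have c2 : (μ i).2 = (μ (i-1)).2 := by rw [h1]; show (μ (i-1)).2 + 0 = _; rw [add_zero]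
    have eμ1 : μ (i+1) = (((μ i).1, (μ i).2 + 1) : ℤ×ℤ) := by
      rw [h2]; exact Prod.ext_iff.mpr ⟨by show (μ i).1 + 0 = _; omega, rfl⟩
    have eμ0 : μ i = (((μ i).1, (μ i).2 + 1 - 1) : ℤ×ℤ) := Prod.ext_iff.mpr ⟨rfl, by omega⟩
    have eμm : μ (i-1) = (((μ i).1 - 1, (μ i).2 + 1 - 1) : ℤ×ℤ) :=
      Prod.ext_iff.mpr ⟨by omega, by omega⟩
    rw [eμ1]
    refine cell_of_corners hpoly hconv ?_ ?_ ?_ ?_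
    · rw [← eμ1]; exact chain_mem hlat hch (i+1)
    · exact hver
    · rw [← eμ0]; exact chain_mem hlat hch i
    · rw [← eμm]; exact chain_mem hlat hch (i-1)
  · obtain ⟨P, Q, _, _, _, _, _, _, hver⟩ := descent_UR hlat hω hch h1 h2 hd
    have c1 : (μ i).1 = (μ (i-1)).1 := by rw [h1]; show (μ (i-1)).1 + 0 = _; rw [add_zero]
    have c2 : (μ i).2 = (μ (i-1)).2 + 1 := by rw [h1]; rfl
    have eμ1 : μ (i+1) = (((μ i).1 + 1, (μ i).2) : ℤ×ℤ) := by
      rw [h2]; exact Prod.ext_iff.mpr ⟨rfl, by show (μ i).2 + 0 = _; omega⟩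
    have eμ0 : μ i = (((μ i).1 + 1 - 1, (μ i).2) : ℤ×ℤ) := Prod.ext_iff.mpr ⟨by omega, rfl⟩
    have eμm : μ (i-1) = (((μ i).1 + 1 - 1, (μ i).2 - 1) : ℤ×ℤ) :=
      Prod.ext_iff.mpr ⟨by omega, by omega⟩
    rw [eμ1]
    refine cell_of_corners hpoly hconv ?_ ?_ ?_ ?_
    · rw [← eμ1]; exact chain_mem hlat hch (i+1)
    · rw [← eμ0]; exact chain_mem hlat hch i
    · exact hver
    · rw [← eμm]; exact chain_mem hlat hch (i-1)

lemma no_consec (hlat : LatticeSetup X m n) (hω : OmegaOK X ω)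
    (hch : IsMaxChainPath X m n μ) {i : ℕ} (hi0 : 1 ≤ i) (hi1 : i + 1 < m + n)
    (hd1 : DescentAt X ω μ i) (hd2 : DescentAt X ω μ (i+1)) : False := by
  have hnn := chain_nonneg hlat hch (i-1)
  rcases descent_turn hlat hω hch hi0 (by omega) hd1 with ⟨h1, h2⟩ | ⟨h1, h2⟩
  · have h2' : μ (i+1) = μ ((i+1)-1) + (0,1) := by
      rw [show i + 1 - 1 = i from rfl]; exact h2
    have h3 : μ (i+2) = μ (i+1) + (1,0) := by
      rcases descent_turn hlat hω hch (by omega) hi1 hd2 with ⟨g1, g2⟩ | ⟨g1, g2⟩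
      · exfalso
        rw [show i + 1 - 1 = i from rfl, h2] at g1
        have hcanc := add_left_cancel g1
        have : ((0 : ℤ),(1 : ℤ)).1 = ((1 : ℤ),(0 : ℤ)).1 := congrArg Prod.fst hcanc
        norm_num at this
      · exact g2
    obtain ⟨P, Q, hPc, hQr, hPa, hQb, hlt1, _, _⟩ := descent_RU hlat hω hch h1 h2 hd1
    obtain ⟨P₂, Q₂, hP₂r, hQ₂c, hP₂b, hQ₂a, hlt2, _, _⟩ :=
      descent_UR hlat hω hch h2' h3 hd2
    have e1 : (μ (i+1)).2 = (μ i).2 + 1 := by rw [h2]; rfl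
    have e2 : (μ (i+1)).1 = (μ i).1 := by rw [h2]; show (μ i).1 + 0 = _; rw [add_zero]
    have c1 : (μ i).1 = (μ (i-1)).1 + 1 := by rw [h1]; rfl
    have hPQ : P₂ = Q := rowMin_unique hP₂r hQr (by omega)
    have hle : P ≤ Q₂ := colMin_le hlat hPc hQ₂c.1 (by omega)
    have hPJ : P ∈ JoinIrr X := colMin_joinIrr hlat hPc (by omega)
    have hQ₂J : Q₂ ∈ JoinIrr X := colMin_joinIrr hlat hQ₂c (by omega)
    have hw := hω.2 P hPJ Q₂ hQ₂J hle
    rw [hPQ] at hlt2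
    omega
  · have h2' : μ (i+1) = μ ((i+1)-1) + (1,0) := by
      rw [show i + 1 - 1 = i from rfl]; exact h2
    have h3 : μ (i+2) = μ (i+1) + (0,1) := by
      rcases descent_turn hlat hω hch (by omega) hi1 hd2 with ⟨g1, g2⟩ | ⟨g1, g2⟩
      · exact g2
      · exfalso
        rw [show i + 1 - 1 = i from rfl, h2] at g1
        have hcanc := add_left_cancel g1
        have : ((1 : ℤ),(0 : ℤ)).1 = ((0 : ℤ),(1 : ℤ)).1 := congrArg Prod.fst hcanc
        norm_num at this
    obtain ⟨P, Q, hPr, hQc, hPb, hQa, hlt1, _, _⟩ := descent_UR hlat hω hch h1 h2 hd1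
    obtain ⟨P₂, Q₂, hP₂c, hQ₂r, hP₂a, hQ₂b, hlt2, _, _⟩ :=
      descent_RU hlat hω hch h2' h3 hd2
    have e1 : (μ (i+1)).1 = (μ i).1 + 1 := by rw [h2]; rfl
    have e2 : (μ (i+1)).2 = (μ i).2 := by rw [h2]; show (μ i).2 + 0 = _; rw [add_zero]
    have c2 : (μ i).2 = (μ (i-1)).2 + 1 := by rw [h1]; rfl
    have hPQ : P₂ = Q := colMin_unique hP₂c hQc (by omega)
    have hle : P ≤ Q₂ := rowMin_le hlat hPr hQ₂r.1 (by omega)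
    have hPJ : P ∈ JoinIrr X := rowMin_joinIrr hlat hPr (by omega)
    have hQ₂J : Q₂ ∈ JoinIrr X := rowMin_joinIrr hlat hQ₂r (by omega)
    have hw := hω.2 P hPJ Q₂ hQ₂J hle
    rw [hPQ] at hlt2
    omega

lemma turn_det_aux (hlat : LatticeSetup X m n) (hω : OmegaOK X ω)
    (hchμ : IsMaxChainPath X m n μ) (hchν : IsMaxChainPath X m n ν) {i : ℕ}
    (hdμ : DescentAt X ω μ i) (hdν : DescentAt X ω ν i)
    (he1 : μ (i-1) = ν (i-1))
    (hμ1 : μ i = μ (i-1) + (1,0)) (hμ2 : μ (i+1) = μ i + (0,1))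
    (hν1 : ν i = ν (i-1) + (0,1)) (hν2 : ν (i+1) = ν i + (1,0)) : False := by
  obtain ⟨P, Q, hPc, hQr, hPa, hQb, hlt1, _, _⟩ := descent_RU hlat hω hchμ hμ1 hμ2 hdμ
  obtain ⟨P₂, Q₂, hP₂r, hQ₂c, hP₂b, hQ₂a, hlt2, _, _⟩ := descent_UR hlat hω hchν hν1 hν2 hdν
  have c1 : (μ i).1 = (μ (i-1)).1 + 1 := by rw [hμ1]; rfl
  have c2 : (μ i).2 = (μ (i-1)).2 := by rw [hμ1]; show (μ (i-1)).2 + 0 = _; rw [add_zero]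
  have d1 : (ν i).1 = (ν (i-1)).1 := by rw [hν1]; show (ν (i-1)).1 + 0 = _; rw [add_zero]
  have d2 : (ν i).2 = (ν (i-1)).2 + 1 := by rw [hν1]; rfl
  have e1f : (μ (i-1)).1 = (ν (i-1)).1 := congrArg Prod.fst he1
  have e1s : (μ (i-1)).2 = (ν (i-1)).2 := congrArg Prod.snd he1
  have hPP : P₂ = Q := rowMin_unique hP₂r hQr (by omega)
  have hQQ : Q₂ = P := colMin_unique hQ₂c hPc (by omega)
  rw [hPP, hQQ] at hlt2
  omega

lemma turn_det (hlat : LatticeSetup X m n) (hω : OmegaOK X ω)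
    (hchμ : IsMaxChainPath X m n μ) (hchν : IsMaxChainPath X m n ν) {i : ℕ}
    (hi0 : 1 ≤ i) (hi1 : i < m + n)
    (hdμ : DescentAt X ω μ i) (hdν : DescentAt X ω ν i)
    (he1 : μ (i-1) = ν (i-1)) : μ i = ν i := by
  rcases descent_turn hlat hω hchμ hi0 hi1 hdμ with ⟨a1, a2⟩ | ⟨a1, a2⟩ <;>
    rcases descent_turn hlat hω hchν hi0 hi1 hdν with ⟨b1, b2⟩ | ⟨b1, b2⟩
  · rw [a1, b1, he1]
  · exact (turn_det_aux hlat hω hchμ hchν hdμ hdν he1 a1 a2 b1 b2).elim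
  · exact (turn_det_aux hlat hω hchν hchμ hdν hdμ he1.symm b1 b2 a1 a2).elim
  · rw [a1, b1, he1]

lemma udiv (hlat : LatticeSetup X m n) (hω : OmegaOK X ω)
    (hchμ : IsMaxChainPath X m n μ) (hchν : IsMaxChainPath X m n ν)
    {k t : ℕ} (hkt : k < t) (ht : t ≤ m + n)
    (heqk : μ k = ν k) (hsμ : μ (k+1) = μ k + (1,0)) (hsν : ν (k+1) = ν k + (0,1))
    (heqt : μ t = ν t)
    (hnd : ∀ r, k < r → r < t → ¬ DescentAt X ω μ r ∧ ¬ DescentAt X ω ν r) : False := by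
  classical
  have ek1 : (μ k).1 = (ν k).1 := congrArg Prod.fst heqk
  have ek2 : (μ k).2 = (ν k).2 := congrArg Prod.snd heqk
  have et1 : (μ t).1 = (ν t).1 := congrArg Prod.fst heqt
  have et2 : (μ t).2 = (ν t).2 := congrArg Prod.snd heqt
  have eμ1 : (μ (k+1)).1 = (μ k).1 + 1 := by rw [hsμ]; rfl
  have eν2 : (ν (k+1)).2 = (ν k).2 + 1 := by rw [hsν]; rfl
  have eν1 : (ν (k+1)).1 = (ν k).1 := by rw [hsν]; show (ν k).1 + 0 = _; rw [add_zero]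
  have hknn := chain_nonneg hlat hchμ k
  -- μ has a U-step in [k, t)
  have hex : ∃ r, (k ≤ r ∧ r < t) ∧ μ (r+1) = μ r + (0,1) := by
    by_contra hc
    push_neg at hc
    have hall : ∀ r, k ≤ r → r ≤ t → (μ r).2 = (μ k).2 := by
      intro r hr1
      induction r, hr1 using Nat.le_induction with
      | base => intro _; rfl
      | succ r hr ih =>
        intro hr2
        rcases chain_step hchμ (show r < m + n by omega) with h | h
        · have e : (μ (r+1)).2 = (μ r).2 := by rw [h]; show (μ r).2 + 0 = _; rw [add_zero]
          rw [e]; exact ih (by omega)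
        · exact absurd h (hc r ⟨hr, by omega⟩)
    have h1 : (μ t).2 = (μ k).2 := hall t (by omega) le_rfl
    have h2 := (Prod.le_def.mp (chain_mono hchν (show k+1 ≤ t by omega))).2
    omega
  obtain ⟨⟨hlk, hl_t⟩, hlU⟩ := Nat.find_spec hex
  set l := Nat.find hex with hldef
  have hmin : ∀ r, r < l → ¬ ((k ≤ r ∧ r < t) ∧ μ (r+1) = μ r + (0,1)) :=
    fun r hr => Nat.find_min hex hr
  have hkl : k < l := by
    rcases Nat.lt_or_ge k l with h | h
    · exact h
    · exfalso
      have hlk' : l = k := by omega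
      have h7 : μ (k+1) = μ k + (0,1) := by rw [← hlk']; exact hlU
      have h8 := add_left_cancel (hsμ.symm.trans h7)
      have h9 : ((1:ℤ),(0:ℤ)).1 = ((0:ℤ),(1:ℤ)).1 := congrArg Prod.fst h8
      norm_num at h9
  have hR : ∀ r, k ≤ r → r < l → μ (r+1) = μ r + (1,0) := by
    intro r hr1 hr2
    rcases chain_step hchμ (show r < m + n by omega) with h | h
    · exact h
    · exact absurd ⟨⟨hr1, by omega⟩, h⟩ (hmin r hr2)
  have hl2 : (μ l).2 = (μ k).2 := by
    have haux : ∀ r, k ≤ r → r ≤ l → (μ r).2 = (μ k).2 := by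
      intro r hr1
      induction r, hr1 using Nat.le_induction with
      | base => intro _; rfl
      | succ r hr ih =>
        intro hr2
        have e : (μ (r+1)).2 = (μ r).2 := by
          rw [hR r hr (by omega)]; show (μ r).2 + 0 = _; rw [add_zero]
        rw [e]; exact ih (by omega)
    exact haux l hlk le_rfl
  have hl1 : (μ k).1 + 1 ≤ (μ l).1 := by
    have h2 := (Prod.le_def.mp (chain_mono hchμ (show k+1 ≤ l by omega))).1
    omega
  obtain ⟨P, hPc, hPa⟩ := exists_colMin (chain_mem hlat hchμ l)
  obtain ⟨Q, hQr, hQb⟩ := exists_rowMin (chain_mem hlat hchμ (l+1))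
  have hQb' : Q.2 = (μ l).2 + 1 := by rw [hQb, hlU]; rfl
  have hPJ : P ∈ JoinIrr X := colMin_joinIrr hlat hPc (by omega)
  have hQJ : Q ∈ JoinIrr X := rowMin_joinIrr hlat hQr (by omega)
  have hQ1 : Q.1 ≤ (μ k).1 := by
    have h5 := rowMin_le_fst hlat hQr (chain_mem hlat hchν (k+1)) (by omega)
    omega
  have hPQne : P ≠ Q := by
    intro h
    rw [h] at hPa
    omega
  have hstepl : μ l = μ (l-1) + (1,0) := by
    have h7 := hR (l-1) (by omega) (by omega)
    rw [show l - 1 + 1 = l by omega] at h7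
    exact h7
  rcases lt_trichotomy (ω Q) (ω P) with hwlt | hweq | hwlt
  · refine (hnd l hkl hl_t).1 ⟨P, hPJ, Q, hQJ, ?_, ?_, ?_, ?_, hwlt⟩
    · exact colMin_le hlat hPc (chain_mem hlat hchμ l) (le_of_eq hPa)
    · intro hle
      have h8 := (Prod.le_def.mp hle).1
      have h9 : (μ (l-1)).1 = (μ l).1 - 1 := by
        rw [hstepl]; show _ = (μ (l-1)).1 + 1 - 1; ring
      omega
    · refine Prod.le_def.mpr ⟨?_, le_of_eq hQb⟩
      have h9 : (μ (l+1)).1 = (μ l).1 := by rw [hlU]; show (μ l).1 + 0 = _; rw [add_zero]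
      omega
    · intro hle
      have h8 := (Prod.le_def.mp hle).2
      omega
  · exact hPQne (hω.1 hPJ hQJ hweq.symm)
  · -- symmetric: build a descent of ν
    have hex' : ∃ r, (k ≤ r ∧ r < t) ∧ ν (r+1) = ν r + (1,0) := by
      by_contra hc
      push_neg at hc
      have hall : ∀ r, k ≤ r → r ≤ t → (ν r).1 = (ν k).1 := by
        intro r hr1
        induction r, hr1 using Nat.le_induction with
        | base => intro _; rfl
        | succ r hr ih =>
          intro hr2
          rcases chain_step hchν (show r < m + n by omega) with h | h
          · exact absurd h (hc r ⟨hr, by omega⟩)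
          · have e : (ν (r+1)).1 = (ν r).1 := by rw [h]; show (ν r).1 + 0 = _; rw [add_zero]
            rw [e]; exact ih (by omega)
      have h1 : (ν t).1 = (ν k).1 := hall t (by omega) le_rfl
      have h2 := (Prod.le_def.mp (chain_mono hchμ (show k+1 ≤ t by omega))).1
      omega
    obtain ⟨⟨hlk', hl_t'⟩, hlR'⟩ := Nat.find_spec hex'
    set l' := Nat.find hex' with hldef'
    have hmin' : ∀ r, r < l' → ¬ ((k ≤ r ∧ r < t) ∧ ν (r+1) = ν r + (1,0)) :=
      fun r hr => Nat.find_min hex' hr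
    have hkl' : k < l' := by
      rcases Nat.lt_or_ge k l' with h | h
      · exact h
      · exfalso
        have hlk'' : l' = k := by omega
        have h7 : ν (k+1) = ν k + (1,0) := by rw [← hlk'']; exact hlR'
        have h8 := add_left_cancel (hsν.symm.trans h7)
        have h9 : ((0:ℤ),(1:ℤ)).1 = ((1:ℤ),(0:ℤ)).1 := congrArg Prod.fst h8
        norm_num at h9
    have hU' : ∀ r, k ≤ r → r < l' → ν (r+1) = ν r + (0,1) := by
      intro r hr1 hr2
      rcases chain_step hchν (show r < m + n by omega) with h | h
      · exact absurd ⟨⟨hr1, by omega⟩, h⟩ (hmin' r hr2)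
      · exact h
    have hl1' : (ν l').1 = (ν k).1 := by
      have haux : ∀ r, k ≤ r → r ≤ l' → (ν r).1 = (ν k).1 := by
        intro r hr1
        induction r, hr1 using Nat.le_induction with
        | base => intro _; rfl
        | succ r hr ih =>
          intro hr2
          have e : (ν (r+1)).1 = (ν r).1 := by
            rw [hU' r hr (by omega)]; show (ν r).1 + 0 = _; rw [add_zero]
          rw [e]; exact ih (by omega)
      exact haux l' hlk' le_rfl
    have hl2' : (ν k).2 + 1 ≤ (ν l').2 := by
      have h2 := (Prod.le_def.mp (chain_mono hchν (show k+1 ≤ l' by omega))).2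
      omega
    obtain ⟨P', hP'r, hP'b⟩ := exists_rowMin (chain_mem hlat hchν l')
    obtain ⟨Q', hQ'c, hQ'a⟩ := exists_colMin (chain_mem hlat hchν (l'+1))
    have hQ'a' : Q'.1 = (ν l').1 + 1 := by rw [hQ'a, hlR']; rfl
    have hP'J : P' ∈ JoinIrr X := rowMin_joinIrr hlat hP'r (by omega)
    have hQ'J : Q' ∈ JoinIrr X := colMin_joinIrr hlat hQ'c (by omega)
    have hq'p : Q' ≤ P := colMin_le hlat hQ'c hPc.1 (by omega)
    have hqp' : Q ≤ P' := rowMin_le hlat hQr hP'r.1 (by omega)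
    have hw1 := hω.2 Q' hQ'J P hPJ hq'p
    have hw2 := hω.2 Q hQJ P' hP'J hqp'
    have hstepl' : ν l' = ν (l'-1) + (0,1) := by
      have h7 := hU' (l'-1) (by omega) (by omega)
      rw [show l' - 1 + 1 = l' by omega] at h7
      exact h7
    refine (hnd l' hkl' hl_t').2 ⟨P', hP'J, Q', hQ'J, ?_, ?_, ?_, ?_, by omega⟩
    · exact rowMin_le hlat hP'r (chain_mem hlat hchν l') (le_of_eq hP'b)
    · intro hle
      have h8 := (Prod.le_def.mp hle).2
      have h9 : (ν (l'-1)).2 = (ν l').2 - 1 := by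
        rw [hstepl']; show _ = (ν (l'-1)).2 + 1 - 1; ring
      omega
    · refine Prod.le_def.mpr ⟨le_of_eq hQ'a, ?_⟩
      have h9 : (ν (l'+1)).2 = (ν l').2 := by rw [hlR']; show (ν l').2 + 0 = _; rw [add_zero]
      have h10 := colMin_le_snd hlat hQ'c (chain_mem hlat hchν (l'+1)) (le_of_eq hQ'a)
      omega
    · intro hle
      have h8 := (Prod.le_def.mp hle).1
      omega

lemma eq_on (hlat : LatticeSetup X m n) (hω : OmegaOK X ω)
    (hchμ : IsMaxChainPath X m n μ) (hchν : IsMaxChainPath X m n ν)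
    {s t : ℕ} (ht : t ≤ m + n) (hs : μ s = ν s) (hte : μ t = ν t)
    (hnd : ∀ r, s < r → r < t → ¬ DescentAt X ω μ r ∧ ¬ DescentAt X ω ν r) :
    ∀ r, s ≤ r → r ≤ t → μ r = ν r := by
  intro r hr1
  induction r, hr1 using Nat.le_induction with
  | base => intro _; exact hs
  | succ r hr ih =>
    intro h2
    have hrt : r < t := by omega
    have heq := ih (by omega)
    rcases chain_step hchμ (show r < m + n by omega) with h | h <;>
      rcases chain_step hchν (show r < m + n by omega) with h' | h'
    · rw [h, h', heq]
    · exact (udiv hlat hω hchμ hchν hrt ht heq h h' hte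
        (fun r' ha hb => hnd r' (by omega) hb)).elim
    · exact (udiv hlat hω hchν hchμ hrt ht heq.symm h' h hte.symm
        (fun r' ha hb => ⟨(hnd r' (by omega) hb).2, (hnd r' (by omega) hb).1⟩)).elim
    · rw [h, h', heq]

lemma chain_pair (hlat : LatticeSetup X m n) (hω : OmegaOK X ω)
    (hch : IsMaxChainPath X m n μ) (h2 : (Des X m n ω μ).ncard = 2) :
    ∃ i j : ℕ, i + 2 ≤ j ∧ Des X m n ω μ = {i, j} ∧ 1 ≤ i ∧ i < m+n ∧ 1 ≤ j ∧ j < m+n ∧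
      DescentAt X ω μ i ∧ DescentAt X ω μ j := by
  obtain ⟨a, b, hab, hset⟩ := Set.ncard_eq_two.mp h2
  have main : ∀ a b : ℕ, a < b → Des X m n ω μ = {a, b} →
      ∃ i j : ℕ, i + 2 ≤ j ∧ Des X m n ω μ = {i, j} ∧ 1 ≤ i ∧ i < m+n ∧ 1 ≤ j ∧ j < m+n ∧
      DescentAt X ω μ i ∧ DescentAt X ω μ j := by
    intro a b hab hset
    have ha : a ∈ Des X m n ω μ := by rw [hset]; exact Set.mem_insert _ _
    have hb : b ∈ Des X m n ω μ := by rw [hset]; exact Set.mem_insert_of_mem _ rfl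
    obtain ⟨ha1, ha2, ha3⟩ := ha
    obtain ⟨hb1, hb2, hb3⟩ := hb
    have hne : b ≠ a + 1 := by
      intro h
      subst h
      exact no_consec hlat hω hch ha1 hb2 ha3 hb3
    exact ⟨a, b, by omega, hset, ha1, ha2, hb1, hb2, ha3, hb3⟩
  rcases lt_or_gt_of_ne hab with h | h
  · exact main a b h hset
  · exact main b a h (by rw [hset, Set.pair_comm])

open Classical in
noncomputable def Fmap (X : Finset (ℤ × ℤ)) (m n : ℕ) (ω : ℤ × ℤ → ℕ) (μ : ℕ → ℤ × ℤ) :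
    Finset (ℤ × ℤ) :=
  ((Finset.range (m + n)).filter (fun i => i ∈ Des X m n ω μ)).image (fun i => μ (i + 1))

open Classical in
lemma Fmap_eq {i j : ℕ} (hset : Des X m n ω μ = {i, j}) (hi : i < m+n) (hj : j < m+n) :
    Fmap X m n ω μ = {μ (i+1), μ (j+1)} := by
  have hfil : (Finset.range (m + n)).filter (fun r => r ∈ Des X m n ω μ)
      = ({i, j} : Finset ℕ) := by
    ext r
    simp only [Finset.mem_filter, Finset.mem_range, hset, Set.mem_insert_iff,
      Set.mem_singleton_iff, Finset.mem_insert, Finset.mem_singleton]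
    constructor
    · rintro ⟨_, h⟩; exact h
    · rintro (rfl | rfl)
      exacts [⟨hi, Or.inl rfl⟩, ⟨hj, Or.inr rfl⟩]
  unfold Fmap
  rw [hfil, Finset.image_insert, Finset.image_singleton]

lemma Fmap_spec (hpoly : IsPolyomino X) (hconv : IsConvexPoly X)
    (hlat : LatticeSetup X m n) (hω : OmegaOK X ω)
    (hch : IsMaxChainPath X m n μ) (h2 : (Des X m n ω μ).ncard = 2) :
    ∃ c d : ℤ × ℤ, Fmap X m n ω μ = {c, d} ∧ c ∈ X ∧ d ∈ X ∧
      c.1 + 1 ≤ d.1 ∧ c.2 + 1 ≤ d.2 := by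
  obtain ⟨i, j, hij, hset, hi0, hi1, hj0, hj1, hdi, hdj⟩ := chain_pair hlat hω hch h2
  refine ⟨μ (i+1), μ (j+1), Fmap_eq hset hi1 hj1,
    descent_cell hpoly hconv hlat hω hch hi0 hi1 hdi,
    descent_cell hpoly hconv hlat hω hch hj0 hj1 hdj, ?_, ?_⟩
  · have hm := (Prod.le_def.mp (chain_mono hch (show i+1 ≤ j-1 by omega))).1
    have hdg := descent_diag hlat hω hch hj0 hj1 hdj
    have e : (μ (j+1)).1 = (μ (j-1)).1 + 1 := by rw [hdg]; rfl
    omega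
  · have hm := (Prod.le_def.mp (chain_mono hch (show i+1 ≤ j-1 by omega))).2
    have hdg := descent_diag hlat hω hch hj0 hj1 hdj
    have e : (μ (j+1)).2 = (μ (j-1)).2 + 1 := by rw [hdg]; rfl
    omega

lemma Fmap_injOn (hpoly : IsPolyomino X) (hconv : IsConvexPoly X)
    (hlat : LatticeSetup X m n) (hω : OmegaOK X ω) :
    Set.InjOn (Fmap X m n ω)
      {μ : ℕ → ℤ × ℤ | IsMaxChainPath X m n μ ∧ (Des X m n ω μ).ncard = 2} := by
  rintro μ₁ ⟨hch1, hnc1⟩ μ₂ ⟨hch2, hnc2⟩ hF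
  obtain ⟨i, j, hij, hset1, hi0, hi1, hj0, hj1, hdi, hdj⟩ := chain_pair hlat hω hch1 hnc1
  obtain ⟨i', j', hij', hset2, hi0', hi1', hj0', hj1', hdi', hdj'⟩ := chain_pair hlat hω hch2 hnc2
  rw [Fmap_eq hset1 hi1 hj1, Fmap_eq hset2 hi1' hj1'] at hF
  have s1 := chain_sum hch1 (show i+1 ≤ m+n by omega)
  have s2 := chain_sum hch1 (show j+1 ≤ m+n by omega)
  have s3 := chain_sum hch2 (show i'+1 ≤ m+n by omega)
  have s4 := chain_sum hch2 (show j'+1 ≤ m+n by omega)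
  have hij_eq : i = i' ∧ j = j' ∧ μ₁ (i+1) = μ₂ (i'+1) ∧ μ₁ (j+1) = μ₂ (j'+1) := by
    have h1 : μ₁ (i+1) ∈ ({μ₂ (i'+1), μ₂ (j'+1)} : Finset (ℤ×ℤ)) := by
      rw [← hF]; exact Finset.mem_insert_self _ _
    have h2 : μ₁ (j+1) ∈ ({μ₂ (i'+1), μ₂ (j'+1)} : Finset (ℤ×ℤ)) := by
      rw [← hF]; exact Finset.mem_insert_of_mem (Finset.mem_singleton_self _)
    simp only [Finset.mem_insert, Finset.mem_singleton] at h1 h2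
    rcases h1 with h1 | h1 <;> rcases h2 with h2 | h2
    · exfalso
      have e1 : (μ₁ (i+1)).1 + (μ₁ (i+1)).2 = (μ₂ (i'+1)).1 + (μ₂ (i'+1)).2 := by rw [h1]
      have e2 : (μ₁ (j+1)).1 + (μ₁ (j+1)).2 = (μ₂ (i'+1)).1 + (μ₂ (i'+1)).2 := by rw [h2]
      omega
    · have e1 : (μ₁ (i+1)).1 + (μ₁ (i+1)).2 = (μ₂ (i'+1)).1 + (μ₂ (i'+1)).2 := by rw [h1]
      have e2 : (μ₁ (j+1)).1 + (μ₁ (j+1)).2 = (μ₂ (j'+1)).1 + (μ₂ (j'+1)).2 := by rw [h2]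
      exact ⟨by omega, by omega, h1, h2⟩
    · exfalso
      have e1 : (μ₁ (i+1)).1 + (μ₁ (i+1)).2 = (μ₂ (j'+1)).1 + (μ₂ (j'+1)).2 := by rw [h1]
      have e2 : (μ₁ (j+1)).1 + (μ₁ (j+1)).2 = (μ₂ (i'+1)).1 + (μ₂ (i'+1)).2 := by rw [h2]
      omega
    · exfalso
      have e1 : (μ₁ (i+1)).1 + (μ₁ (i+1)).2 = (μ₂ (j'+1)).1 + (μ₂ (j'+1)).2 := by rw [h1]
      have e2 : (μ₁ (j+1)).1 + (μ₁ (j+1)).2 = (μ₂ (j'+1)).1 + (μ₂ (j'+1)).2 := by rw [h2]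
      omega
  obtain ⟨hii, hjj, hA, hB⟩ := hij_eq
  subst hii
  subst hjj
  have g1 := descent_diag hlat hω hch1 hi0 hi1 hdi
  have g2 := descent_diag hlat hω hch2 hi0' hi1' hdi'
  have hd1 : μ₁ (i-1) = μ₂ (i-1) := by
    have h9 : μ₁ (i-1) + ((1,1) : ℤ×ℤ) = μ₂ (i-1) + ((1,1) : ℤ×ℤ) := by
      rw [← g1, ← g2, hA]
    exact add_right_cancel h9
  have g3 := descent_diag hlat hω hch1 hj0 hj1 hdj
  have g4 := descent_diag hlat hω hch2 hj0' hj1' hdj'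
  have hd2 : μ₁ (j-1) = μ₂ (j-1) := by
    have h9 : μ₁ (j-1) + ((1,1) : ℤ×ℤ) = μ₂ (j-1) + ((1,1) : ℤ×ℤ) := by
      rw [← g3, ← g4, hB]
    exact add_right_cancel h9
  have notDes1 : ∀ r, 1 ≤ r → r < m+n → r ≠ i → r ≠ j → ¬ DescentAt X ω μ₁ r := by
    intro r a b c d hd
    have hmem : r ∈ Des X m n ω μ₁ := ⟨a, b, hd⟩
    rw [hset1] at hmem
    rcases Set.mem_insert_iff.mp hmem with h | h
    · exact c h
    · exact d (Set.mem_singleton_iff.mp h)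
  have notDes2 : ∀ r, 1 ≤ r → r < m+n → r ≠ i → r ≠ j → ¬ DescentAt X ω μ₂ r := by
    intro r a b c d hd
    have hmem : r ∈ Des X m n ω μ₂ := ⟨a, b, hd⟩
    rw [hset2] at hmem
    rcases Set.mem_insert_iff.mp hmem with h | h
    · exact c h
    · exact d (Set.mem_singleton_iff.mp h)
  have E1 := eq_on hlat hω hch1 hch2 (show i-1 ≤ m+n by omega)
    (hch1.1.trans hch2.1.symm) hd1
    (fun r hr1 hr2 => ⟨notDes1 r (by omega) (by omega) (by omega) (by omega),
      notDes2 r (by omega) (by omega) (by omega) (by omega)⟩)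
  have E2 : μ₁ i = μ₂ i := turn_det hlat hω hch1 hch2 hi0 hi1 hdi hdi' hd1
  have E3 := eq_on hlat hω hch1 hch2 (show j-1 ≤ m+n by omega) hA hd2
    (fun r hr1 hr2 => ⟨notDes1 r (by omega) (by omega) (by omega) (by omega),
      notDes2 r (by omega) (by omega) (by omega) (by omega)⟩)
  have E4 : μ₁ j = μ₂ j := turn_det hlat hω hch1 hch2 hj0 hj1 hdj hdj' hd2
  have E5 := eq_on hlat hω hch1 hch2 (le_refl (m+n)) hB
    ((hch1.2.2.1 (m+n) le_rfl).trans (hch2.2.2.1 (m+n) le_rfl).symm)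
    (fun r hr1 hr2 => ⟨notDes1 r (by omega) (by omega) (by omega) (by omega),
      notDes2 r (by omega) (by omega) (by omega) (by omega)⟩)
  funext r
  rcases le_or_gt r (m+n) with hr | hr
  · rcases Nat.lt_or_ge r i with h | h
    · exact E1 r (by omega) (by omega)
    · by_cases hri : r = i
      · rw [hri]; exact E2
      · by_cases hrj : r = j
        · rw [hrj]; exact E4
        · rcases Nat.lt_or_ge r j with h2 | h2
          · exact E3 r (by omega) (by omega)
          · exact E5 r (by omega) hr
  · rw [hch1.2.2.1 r (by omega), hch2.2.2.1 r (by omega)]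

theorem main_thm (X : Finset (ℤ × ℤ)) (m n : ℕ)
    (hpoly : IsPolyomino X) (hconv : IsConvexPoly X)
    (hlat : LatticeSetup X m n)
    (hthin : ¬ IsThin X)
    (ω : ℤ × ℤ → ℕ) (hω : OmegaOK X ω) :
    numChains X m n ω 2 < rook X 2 := by
  classical
  have hthin' : ∃ w : ℤ × ℤ, w ∈ X ∧ w + ((1,0) : ℤ×ℤ) ∈ X ∧ w + ((0,1) : ℤ×ℤ) ∈ X ∧
      w + ((1,1) : ℤ×ℤ) ∈ X := by
    by_contra hc
    exact hthin hc
  obtain ⟨w, hw0, hw1, hw2, hw3⟩ := hthin'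
  set Chains := {μ : ℕ → ℤ × ℤ | IsMaxChainPath X m n μ ∧ (Des X m n ω μ).ncard = 2}
    with hChains
  set Configs := {S : Finset (ℤ × ℤ) | IsRookConfig X 2 S} with hConfigs
  set S₀ : Finset (ℤ × ℤ) := {w + ((1,0) : ℤ×ℤ), w + ((0,1) : ℤ×ℤ)} with hS₀def
  have ew1 : (w + ((1,0) : ℤ×ℤ)).1 = w.1 + 1 := rfl
  have ew2 : (w + ((1,0) : ℤ×ℤ)).2 = w.2 + 0 := rfl
  have ew3 : (w + ((0,1) : ℤ×ℤ)).1 = w.1 + 0 := rfl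
  have ew4 : (w + ((0,1) : ℤ×ℤ)).2 = w.2 + 1 := rfl
  have hc0d0 : (w + ((1,0) : ℤ×ℤ)) ≠ (w + ((0,1) : ℤ×ℤ)) := by
    intro h
    have := congrArg Prod.fst h
    omega
  have hS₀mem : S₀ ∈ Configs := by
    refine ⟨?_, ?_, ?_⟩
    · intro c hc
      simp only [hS₀def, Finset.coe_insert, Finset.coe_singleton, Set.mem_insert_iff,
        Set.mem_singleton_iff] at hc
      rcases hc with rfl | rfl
      · exact hw1
      · exact hw2
    · rw [hS₀def, Finset.card_insert_of_notMem (by simpa using hc0d0),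
        Finset.card_singleton]
    · intro c hc d hd hcd
      simp only [hS₀def, Finset.mem_insert, Finset.mem_singleton] at hc hd
      rcases hc with rfl | rfl <;> rcases hd with rfl | rfl
      · exact absurd rfl hcd
      · exact ⟨by omega, by omega⟩
      · exact ⟨by omega, by omega⟩
      · exact absurd rfl hcd
  have hconfin : Configs.Finite := by
    apply Set.Finite.subset (Finset.finite_toSet X.powerset)
    intro S hS
    simp only [Finset.mem_coe, Finset.mem_powerset]
    intro c hc
    exact hS.1 hc
  have himg : ∀ μ' ∈ Chains, Fmap X m n ω μ' ∈ Configs \ {S₀} := by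
    intro μ' hμ'
    obtain ⟨c, d, hFeq, hcX, hdX, h1, h2⟩ := Fmap_spec hpoly hconv hlat hω hμ'.1 hμ'.2
    have hcd : c ≠ d := by
      intro h
      rw [h] at h1
      omega
    constructor
    · refine ⟨?_, ?_, ?_⟩
      · intro e he
        rw [hFeq] at he
        simp only [Finset.coe_insert, Finset.coe_singleton, Set.mem_insert_iff,
          Set.mem_singleton_iff] at he
        rcases he with rfl | rfl
        · exact hcX
        · exact hdX
      · rw [hFeq, Finset.card_insert_of_notMem (by simpa using hcd), Finset.card_singleton]
      · intro e he f hf hef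
        rw [hFeq] at he hf
        simp only [Finset.mem_insert, Finset.mem_singleton] at he hf
        rcases he with rfl | rfl <;> rcases hf with rfl | rfl
        · exact absurd rfl hef
        · exact ⟨by omega, by omega⟩
        · exact ⟨by omega, by omega⟩
        · exact absurd rfl hef
    · simp only [Set.mem_singleton_iff]
      intro hFS
      rw [hFeq] at hFS
      have hcmem : c ∈ S₀ := by
        rw [← hFS]; exact Finset.mem_insert_self _ _
      have hdmem : d ∈ S₀ := by
        rw [← hFS]; exact Finset.mem_insert_of_mem (Finset.mem_singleton_self _)
      simp only [hS₀def, Finset.mem_insert, Finset.mem_singleton] at hcmem hdmem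
      rcases hcmem with rfl | rfl <;> rcases hdmem with rfl | rfl
      · exact hcd rfl
      · omega
      · omega
      · exact hcd rfl
  have hinj := Fmap_injOn hpoly hconv hlat hω
  have hsub : Fmap X m n ω '' Chains ⊆ Configs \ {S₀} := by
    rintro S ⟨μ', hμ', rfl⟩
    exact himg μ' hμ'
  have e1 : numChains X m n ω 2 = Chains.ncard := rfl
  have e2 : rook X 2 = Configs.ncard := rfl
  rw [e1, e2]
  calc Chains.ncard = (Fmap X m n ω '' Chains).ncard :=
        (Set.ncard_image_of_injOn hinj).symm
    _ ≤ (Configs \ {S₀}).ncard := Set.ncard_le_ncard hsub hconfin.diff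
    _ < Configs.ncard := Set.ncard_diff_singleton_lt_of_mem hS₀mem hconfin

end RR

theorem rinaldo_romeo_M2_lt_r2 (X : Finset (ℤ × ℤ)) (m n : ℕ)
    (hpoly : IsPolyomino X) (hconv : IsConvexPoly X)
    (hlat : LatticeSetup X m n)
    (hthin : ¬ IsThin X)
    (ω : ℤ × ℤ → ℕ) (hω : OmegaOK X ω) :
    numChains X m n ω 2 < rook X 2 :=
  RR.main_thm X m n hpoly hconv hlat hthin ω hω
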